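/- arXiv:1710.01266 — 3 statements merged into one kernel-verified Lean document; each statement's English description precedes it below -/
import Mathlib

section
/- Let m ≥ 1, let Γ be a symmetric positive definite real m×m matrix with smallest eigenvalue κ₁², and let A be a symmetric real m×m matrix. Then for every ε ∈ ℝ and every s ∈ ℝ with s ≠ 0, the complex m×m matrix D(ε, s) = −ε s² I + i s Γ + ε A is invertible and ‖D(ε, s)⁻¹‖ ≤ 1/(κ₁² |s|). -/
noncomputable section

/-- Operator norm of a complex `m × m` matrix induced by the Euclidean norm on `ℂ^m`. -/
def l2OpNorm (m : ℕ) (D : Matrix (Fin m) (Fin m) ℂ) : ℝ :=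
  ‖LinearMap.toContinuousLinearMap (Matrix.toEuclideanLin D)‖

/-- The propagator matrix `D(ε,s) = -ε s² 1 + i s Γ + ε A`. -/
def propagator (m : ℕ) (Γ A : Matrix (Fin m) (Fin m) ℝ) (ε s : ℝ) :
    Matrix (Fin m) (Fin m) ℂ :=
  (-(ε * s ^ 2) : ℂ) • (1 : Matrix (Fin m) (Fin m) ℂ)
    + (Complex.I * s) • Γ.map (fun a => (a : ℂ))
    + (ε : ℂ) • A.map (fun a => (a : ℂ))

open Matrix Complex in
open scoped ComplexOrder Pointwise in
theorem propagator_inverse_bound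
    (m : ℕ) (hm : 1 ≤ m)
    (Γ A : Matrix (Fin m) (Fin m) ℝ)
    (hΓsymm : Γ.IsSymm) (hΓpos : Γ.PosDef) (hAsymm : A.IsSymm)
    (κ₁ : ℝ) (hκ : IsLeast (spectrum ℝ Γ) (κ₁ ^ 2))
    (ε s : ℝ) (hs : s ≠ 0) :
    IsUnit (propagator m Γ A ε s) ∧
      l2OpNorm m (propagator m Γ A ε s)⁻¹ ≤ 1 / (κ₁ ^ 2 * |s|) := by
  classical
  set D := propagator m Γ A ε s with hD
  set Γℂ := Γ.map (fun a => (a : ℂ)) with hΓℂ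
  set Aℂ := A.map (fun a => (a : ℂ)) with hAℂ
  -- κ₁² > 0
  have hΓunit : IsUnit Γ :=
    (Matrix.isUnit_iff_isUnit_det Γ).mpr (isUnit_iff_ne_zero.mpr hΓpos.det_pos.ne')
  have hκpos : 0 < κ₁ ^ 2 := by
    rcases lt_or_eq_of_le (sq_nonneg κ₁) with h | h
    · exact h
    · exfalso
      have h0 : (0 : ℝ) ∈ spectrum ℝ Γ := by rw [h]; exact hκ.1
      exact (spectrum.zero_mem_iff ℝ).mp h0 hΓunit
  have hc : 0 < κ₁ ^ 2 * |s| := mul_pos hκpos (abs_pos.mpr hs)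
  -- The real matrix P = Γ - κ₁² • 1 is positive semidefinite
  set P := Γ - κ₁ ^ 2 • (1 : Matrix (Fin m) (Fin m) ℝ) with hP
  have hPherm : P.IsHermitian := by
    apply Matrix.IsHermitian.ext
    intro i j
    have hΓ := congrFun (congrFun hΓsymm i) j
    simp only [Matrix.transpose_apply] at hΓ
    simp [hP, Matrix.sub_apply, Matrix.smul_apply, Matrix.one_apply, hΓ, eq_comm]
  have hPspec : spectrum ℝ P = spectrum ℝ Γ - ({κ₁ ^ 2} : Set ℝ) := by
    rw [spectrum.sub_singleton_eq, hP, Algebra.algebraMap_eq_smul_one]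
  have hPpsd : P.PosSemidef := by
    apply hPherm.posSemidef_iff_eigenvalues_nonneg.mpr
    intro i
    show (0 : ℝ) ≤ _
    have hmem := hPherm.eigenvalues_mem_spectrum_real i
    rw [hPspec, Set.sub_singleton] at hmem
    obtain ⟨x, hx, hxe⟩ := hmem
    have h2 := hκ.2 hx
    simp only at hxe
    rw [← hxe]
    linarith
  -- Its complexification is positive semidefinite
  have hPCpsd : (P.map (fun a => (a : ℂ))).PosSemidef := by
    obtain ⟨B, hB⟩ := by
      open scoped MatrixOrder Matrix.Norms.L2Operator in
      exact CStarAlgebra.nonneg_iff_eq_star_mul_self.mp hPpsd.nonneg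
    have hmap : P.map (fun a => (a : ℂ))
        = (B.map (fun a => (a : ℂ)))ᴴ * (B.map (fun a => (a : ℂ))) := by
      ext i j
      simp [hB, Matrix.mul_apply, Matrix.conjTranspose_apply, Matrix.map_apply,
        Complex.conj_ofReal]
    rw [hmap]
    exact Matrix.posSemidef_conjTranspose_mul_self _
  -- Hermitianness of complexified Γ and A
  have hsemi : Function.Semiconj (fun a : ℝ => (a : ℂ)) star star := by
    intro a; simp [Complex.conj_ofReal]
  have hΓrealHerm : Γ.IsHermitian := by
    apply Matrix.IsHermitian.ext
    intro i j
    have hΓ := congrFun (congrFun hΓsymm i) j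
    simp only [Matrix.transpose_apply] at hΓ
    simpa using hΓ
  have hArealHerm : A.IsHermitian := by
    apply Matrix.IsHermitian.ext
    intro i j
    have hA := congrFun (congrFun hAsymm i) j
    simp only [Matrix.transpose_apply] at hA
    simpa using hA
  have hΓCherm : Γℂ.IsHermitian := hΓrealHerm.map _ hsemi
  have hACherm : Aℂ.IsHermitian := hArealHerm.map _ hsemi
  -- key quadratic inequality
  have key : ∀ v : EuclideanSpace ℂ (Fin m),
      κ₁ ^ 2 * |s| * ‖v‖ ^ 2 ≤ ‖v‖ * ‖Matrix.toEuclideanLin D v‖ := by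
    intro v
    set g : ℂ := inner ℂ v (Matrix.toEuclideanLin Γℂ v) with hg
    set a : ℂ := inner ℂ v (Matrix.toEuclideanLin Aℂ v) with ha
    -- g and a are real
    have hgreal : g.im = 0 := by
      have hsymT := (Matrix.isHermitian_iff_isSymmetric.mp hΓCherm)
      have hcj : (starRingEnd ℂ) g = g := by
        calc (starRingEnd ℂ) g = inner ℂ (Matrix.toEuclideanLin Γℂ v) v := by
              rw [hg, inner_conj_symm]
          _ = g := by rw [hg]; exact hsymT v v
      exact Complex.conj_eq_iff_im.mp hcj
    have hareal : a.im = 0 := by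
      have hsymT := (Matrix.isHermitian_iff_isSymmetric.mp hACherm)
      have hcj : (starRingEnd ℂ) a = a := by
        calc (starRingEnd ℂ) a = inner ℂ (Matrix.toEuclideanLin Aℂ v) v := by
              rw [ha, inner_conj_symm]
          _ = a := by rw [ha]; exact hsymT v v
      exact Complex.conj_eq_iff_im.mp hcj
    -- g.re ≥ κ₁² ‖v‖²
    have hvv_re : (inner ℂ v v : ℂ).re = ‖v‖ ^ 2 := by
      simpa using inner_self_eq_norm_sq (𝕜 := ℂ) (x := v)
    have hvv_im : (inner ℂ v v : ℂ).im = 0 := by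
      simpa using inner_self_im (𝕜 := ℂ) (x := v)
    have hgre : κ₁ ^ 2 * ‖v‖ ^ 2 ≤ g.re := by
      have hPe : (P.map (fun a => (a : ℂ))) = Γℂ - (κ₁ ^ 2 : ℂ) • 1 := by
        ext i j
        simp [hP, hΓℂ, Matrix.map_apply, Matrix.sub_apply, Matrix.smul_apply,
          Matrix.one_apply, apply_ite (fun x : ℝ => (x : ℂ))]
      have hid : g - (κ₁ ^ 2 : ℂ) * inner ℂ v v
          = inner ℂ v (Matrix.toEuclideanLin (P.map (fun a => (a : ℂ))) v) := by
        rw [hPe, map_sub, _root_.map_smul, LinearMap.sub_apply, LinearMap.smul_apply,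
          inner_sub_right, inner_smul_right, hg]
        congr 2
        have : Matrix.toEuclideanLin (1 : Matrix (Fin m) (Fin m) ℂ) v = v := by
          rw [Matrix.toEuclideanLin_apply]
          simp
        rw [this]
    -- the dot-product form is nonneg
      have hnn : 0 ≤ (inner ℂ v (Matrix.toEuclideanLin (P.map (fun a => (a : ℂ))) v) : ℂ).re := by
        have := hPCpsd.re_dotProduct_nonneg (WithLp.ofLp v)
        rw [EuclideanSpace.inner_eq_star_dotProduct, dotProduct_comm]
        exact this
      have hre : (g - (κ₁ ^ 2 : ℂ) * inner ℂ v v).re = g.re - κ₁ ^ 2 * ‖v‖ ^ 2 := by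
        rw [Complex.sub_re, Complex.mul_re, hvv_re, hvv_im, ← Complex.ofReal_pow,
          Complex.ofReal_re, Complex.ofReal_im]
        ring
      rw [hid] at hre
      linarith [hnn, hre.symm.le, hre.le]
    -- imaginary part of the full inner product
    have hinner : (inner ℂ v (Matrix.toEuclideanLin D v) : ℂ)
        = (-(↑ε * ↑s ^ 2) : ℂ) * (inner ℂ v v : ℂ) + (Complex.I * s) * g + (ε : ℂ) * a := by
      rw [hD]
      show (inner ℂ v (Matrix.toEuclideanLin (propagator m Γ A ε s) v) : ℂ) = _
      rw [propagator, map_add, map_add, _root_.map_smul, _root_.map_smul, _root_.map_smul]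
      have h1 : Matrix.toEuclideanLin (1 : Matrix (Fin m) (Fin m) ℂ) v = v := by
        rw [Matrix.toEuclideanLin_apply]; simp
      simp only [LinearMap.add_apply, LinearMap.smul_apply, h1]
      rw [inner_add_right, inner_add_right, inner_smul_right, inner_smul_right,
        inner_smul_right, ← hΓℂ, ← hAℂ, ← hg, ← ha]
    have him : (inner ℂ v (Matrix.toEuclideanLin D v) : ℂ).im = s * g.re := by
      have hco : (-(↑ε * ↑s ^ 2) : ℂ) = ((-(ε * s ^ 2) : ℝ) : ℂ) := by push_cast; ring
      rw [hinner, hco]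
      simp only [Complex.add_im, Complex.mul_im, Complex.mul_re, Complex.I_re, Complex.I_im,
        Complex.ofReal_re, Complex.ofReal_im, hgreal, hareal, hvv_im]
      ring
    -- put it together
    have h1 : κ₁ ^ 2 * |s| * ‖v‖ ^ 2 ≤ |s| * g.re := by
      have : |s| * (κ₁ ^ 2 * ‖v‖ ^ 2) ≤ |s| * g.re :=
        mul_le_mul_of_nonneg_left hgre (abs_nonneg s)
      linarith
    have h2 : |s| * g.re ≤ |(inner ℂ v (Matrix.toEuclideanLin D v) : ℂ).im| := by
      rw [him, abs_mul]
      have : g.re ≤ |g.re| := le_abs_self _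
      nlinarith [abs_nonneg s]
    have h3 : |(inner ℂ v (Matrix.toEuclideanLin D v) : ℂ).im|
        ≤ ‖(inner ℂ v (Matrix.toEuclideanLin D v) : ℂ)‖ :=
      Complex.abs_im_le_norm _
    have h4 : ‖(inner ℂ v (Matrix.toEuclideanLin D v) : ℂ)‖
        ≤ ‖v‖ * ‖Matrix.toEuclideanLin D v‖ := norm_inner_le_norm _ _
    linarith
  -- invertibility
  have hinj : Function.Injective (D.mulVec) := by
    have hker : ∀ z : Fin m → ℂ, D *ᵥ z = 0 → z = 0 := by
      intro z hz
      set v := (WithLp.equiv 2 (Fin m → ℂ)).symm z with hv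
      have hT : Matrix.toEuclideanLin D v = 0 := by
        rw [hv, WithLp.equiv_symm_apply, Matrix.toEuclideanLin_apply_piLp_toLp, hz]
        rfl
      have := key v
      rw [hT, norm_zero, mul_zero] at this
      have hv0 : ‖v‖ = 0 := by
        by_contra hne
        have hp : 0 < ‖v‖ := lt_of_le_of_ne (norm_nonneg v) (Ne.symm hne)
        nlinarith [mul_pos hc (mul_pos hp hp)]
      have : v = 0 := norm_eq_zero.mp hv0
      rw [hv] at this
      simpa using congrArg (WithLp.equiv 2 (Fin m → ℂ)) this
    intro x y hxy
    have hsub : D *ᵥ (x - y) = 0 := by rw [Matrix.mulVec_sub, hxy, sub_self]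
    exact sub_eq_zero.mp (hker _ hsub)
  have hunit : IsUnit D := Matrix.mulVec_injective_iff_isUnit.mp hinj
  refine ⟨hunit, ?_⟩
  have hdet : IsUnit D.det := (Matrix.isUnit_iff_isUnit_det D).mp hunit
  have hDDinv : D * D⁻¹ = 1 := Matrix.mul_nonsing_inv D hdet
  rw [l2OpNorm]
  apply ContinuousLinearMap.opNorm_le_bound _ (by positivity)
  intro w
  have hcoe : (LinearMap.toContinuousLinearMap (Matrix.toEuclideanLin D⁻¹)) w
      = Matrix.toEuclideanLin D⁻¹ w := rfl
  rw [hcoe]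
  set v := Matrix.toEuclideanLin D⁻¹ w with hv
  have hw : Matrix.toEuclideanLin D v = w := by
    rw [hv, Matrix.toEuclideanLin_apply, Matrix.toEuclideanLin_apply]
    simp only [Equiv.apply_symm_apply, Matrix.mulVec_mulVec, hDDinv, Matrix.one_mulVec]
  have hkey := key v
  rw [hw] at hkey
  by_cases hv0 : ‖v‖ = 0
  · rw [hv0]
    positivity
  · have hvpos : 0 < ‖v‖ := lt_of_le_of_ne (norm_nonneg v) (Ne.symm hv0)
    rw [one_div]
    have h1 : κ₁ ^ 2 * |s| * ‖v‖ ≤ ‖w‖ := by nlinarith [hkey, mul_pos hvpos hvpos]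
    calc ‖v‖ = (κ₁ ^ 2 * |s|)⁻¹ * (κ₁ ^ 2 * |s| * ‖v‖) := by rw [← mul_assoc, inv_mul_cancel₀ hc.ne', one_mul]
      _ ≤ (κ₁ ^ 2 * |s|)⁻¹ * ‖w‖ :=
          mul_le_mul_of_nonneg_left h1 (le_of_lt (inv_pos.mpr hc))

end
end

section
/- Let m ≥ 1 and let Γ and A be symmetric positive definite real m×m matrices. Let κ₁² denote the smallest eigenvalue of Γ, let K be the positive definite symmetric square root of Γ, let b₁ > 0 denote the smallest eigenvalue of K⁻¹ A K⁻¹, and set α = √(b₁ κ₁² / 2). Then for every ε > 0 and every s ∈ ℝ with |s| ≤ α, the complex matrix D(ε, s) = −ε s² I + i s Γ + ε A is invertible and ‖D(ε, s)⁻¹‖ ≤ 2/(κ₁² b₁ ε). -/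
open Matrix
open scoped ComplexOrder


lemma sub_smul_one_posSemidef {m : ℕ} {M : Matrix (Fin m) (Fin m) ℝ} (hM : M.IsHermitian) {c : ℝ}
    (h : ∀ μ ∈ spectrum ℝ M, c ≤ μ) : (M - c • 1).PosSemidef := by
  classical
  have he : ∀ i, c ≤ hM.eigenvalues i := fun i => h _ (hM.eigenvalues_mem_spectrum_real i)
  have key : M - c • 1 =
      (hM.eigenvectorUnitary : Matrix (Fin m) (Fin m) ℝ) *
        diagonal (fun i => hM.eigenvalues i - c) *
        ((hM.eigenvectorUnitary : Matrix (Fin m) (Fin m) ℝ))ᴴ := by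
    have h1 : diagonal (fun i => hM.eigenvalues i - c) =
        diagonal (RCLike.ofReal ∘ hM.eigenvalues) - c • (1 : Matrix (Fin m) (Fin m) ℝ) := by
      have h2 : c • (1 : Matrix (Fin m) (Fin m) ℝ) = diagonal (fun _ => c) := by
        ext i j
        by_cases h : i = j <;> simp [Matrix.diagonal, Matrix.one_apply, h]
      rw [h2, ← Matrix.diagonal_sub]
      congr 1
    rw [h1]
    rw [Matrix.mul_sub, Matrix.sub_mul, ← Matrix.star_eq_conjTranspose]
    conv_lhs => rw [hM.spectral_theorem, Unitary.conjStarAlgAut_apply]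
    congr 1
    rw [Matrix.mul_smul, Matrix.smul_mul, Matrix.mul_one]
    rw [(Matrix.mem_unitaryGroup_iff).mp hM.eigenvectorUnitary.2]
  rw [key]
  exact (posSemidef_diagonal_iff.mpr fun i => sub_nonneg.mpr (he i)).mul_mul_conjTranspose_same _

lemma posSemidef_map_complex {m : ℕ} {Q : Matrix (Fin m) (Fin m) ℝ} (hQ : Q.PosSemidef) :
    (Q.map (fun a => (a : ℂ))).PosSemidef := by
  obtain ⟨B, hB⟩ : ∃ B : Matrix (Fin m) (Fin m) ℝ, Q = Bᴴ * B := by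
    classical
    open scoped MatrixOrder in
    obtain ⟨X, hX, -, rfl⟩ := CFC.exists_sqrt_of_isSelfAdjoint_of_quasispectrumRestricts
      hQ.isHermitian (QuasispectrumRestricts.nnreal_of_nonneg hQ.nonneg)
    exact ⟨X, by rw [show Xᴴ = X from hX.star_eq]⟩
  have : (Q.map fun a => (a : ℂ)) = (B.map fun a => (a : ℂ))ᴴ * (B.map fun a => (a : ℂ)) := by
    rw [hB, show ((fun a : ℝ => (a : ℂ))) = ((Complex.ofRealHom : ℝ →+* ℂ) : ℝ → ℂ) from rfl,
      Matrix.map_mul]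
    congr 1
    rw [Matrix.conjTranspose_map]
    intro r; simp
  rw [this]
  exact Matrix.posSemidef_conjTranspose_mul_self _

lemma psd_smul {m : ℕ} {Q : Matrix (Fin m) (Fin m) ℝ} (hQ : Q.PosSemidef) {c : ℝ} (hc : 0 ≤ c) :
    (c • Q).PosSemidef := by
  refine Matrix.PosSemidef.of_dotProduct_mulVec_nonneg ?_ (fun x => ?_)
  · unfold Matrix.IsHermitian
    rw [Matrix.conjTranspose_smul, hQ.1]
    simp
  · rw [Matrix.smul_mulVec, dotProduct_smul]
    exact smul_nonneg hc (hQ.dotProduct_mulVec_nonneg x)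



noncomputable section

theorem propagator_inverse_bound_small_s
    (m : ℕ) (hm : 1 ≤ m)
    (Γ A : Matrix (Fin m) (Fin m) ℝ)
    (hΓsymm : Γ.IsSymm) (hΓpos : Γ.PosDef) (hAsymm : A.IsSymm) (hApos : A.PosDef)
    (κ₁ : ℝ) (hκ : IsLeast (spectrum ℝ Γ) (κ₁ ^ 2))
    (K : Matrix (Fin m) (Fin m) ℝ) (hKsymm : K.IsSymm) (hKpos : K.PosDef)
    (hKsq : K * K = Γ)
    (b₁ : ℝ) (hb₁pos : 0 < b₁) (hb₁ : IsLeast (spectrum ℝ (K⁻¹ * A * K⁻¹)) b₁)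
    (ε : ℝ) (hε : 0 < ε) (s : ℝ) (hs : |s| ≤ Real.sqrt (b₁ * κ₁ ^ 2 / 2)) :
    IsUnit (propagator m Γ A ε s) ∧
      l2OpNorm m (propagator m Γ A ε s)⁻¹ ≤ 2 / (κ₁ ^ 2 * b₁ * ε) := by
  classical
  -- Hermitian facts
  have hΓH : Γ.IsHermitian := by
    rw [Matrix.IsHermitian, conjTranspose_eq_transpose_of_trivial]; exact hΓsymm
  have hAH : A.IsHermitian := by
    rw [Matrix.IsHermitian, conjTranspose_eq_transpose_of_trivial]; exact hAsymm
  have hKH : K.IsHermitian := by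
    rw [Matrix.IsHermitian, conjTranspose_eq_transpose_of_trivial]; exact hKsymm
  -- κ₁² > 0
  have hκpos : 0 < κ₁ ^ 2 := by
    have h1 := hκ.1
    rw [hΓH.spectrum_real_eq_range_eigenvalues] at h1
    obtain ⟨i, hi⟩ := h1
    rw [← hi]
    exact hΓpos.eigenvalues_pos i
  -- s² ≤ b₁κ₁²/2
  have hs2 : s ^ 2 ≤ b₁ * κ₁ ^ 2 / 2 := by
    have h0 : (0:ℝ) ≤ b₁ * κ₁ ^ 2 / 2 := by positivity
    calc s ^ 2 = |s| ^ 2 := (sq_abs s).symm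
    _ ≤ Real.sqrt (b₁ * κ₁ ^ 2 / 2) ^ 2 := by
        exact pow_le_pow_left₀ (abs_nonneg s) hs 2
    _ = b₁ * κ₁ ^ 2 / 2 := Real.sq_sqrt h0
  -- psd chain
  have hKdet : IsUnit K.det := hKpos.det_pos.ne'.isUnit
  have hKiH : (K⁻¹).IsHermitian := by
    rw [Matrix.IsHermitian, Matrix.conjTranspose_nonsing_inv, hKH.eq]
  have hBH : (K⁻¹ * A * K⁻¹).IsHermitian := by
    have h := Matrix.isHermitian_conjTranspose_mul_mul K⁻¹ hAH
    rwa [hKiH.eq] at h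
  have P1 : (K⁻¹ * A * K⁻¹ - b₁ • 1).PosSemidef :=
    sub_smul_one_posSemidef hBH (fun μ hμ => hb₁.2 hμ)
  have P2 : (Γ - κ₁ ^ 2 • 1).PosSemidef :=
    sub_smul_one_posSemidef hΓH (fun μ hμ => hκ.2 hμ)
  have P1' : (A - b₁ • Γ).PosSemidef := by
    have h := P1.mul_mul_conjTranspose_same K
    have he : K * (K⁻¹ * A * K⁻¹ - b₁ • 1) * Kᴴ = A - b₁ • Γ := by
      rw [hKH.eq, Matrix.mul_sub, Matrix.sub_mul]
      congr 1
      · rw [← Matrix.mul_assoc, ← Matrix.mul_assoc, Matrix.mul_nonsing_inv K hKdet,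
          Matrix.one_mul, Matrix.mul_assoc, Matrix.nonsing_inv_mul K hKdet, Matrix.mul_one]
      · rw [Matrix.mul_smul, Matrix.smul_mul, Matrix.mul_one, hKsq]
    rwa [he] at h
  have hN : (A - (s ^ 2 + b₁ * κ₁ ^ 2 / 2) • 1).PosSemidef := by
    have heq : A - (s ^ 2 + b₁ * κ₁ ^ 2 / 2) • (1 : Matrix (Fin m) (Fin m) ℝ) =
        (A - b₁ • Γ) + b₁ • (Γ - κ₁ ^ 2 • 1) + (b₁ * κ₁ ^ 2 / 2 - s ^ 2) • 1 := by
      module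
    rw [heq]
    exact (P1'.add (psd_smul P2 hb₁pos.le)).add
      (psd_smul Matrix.PosSemidef.one (by linarith))
  have hMr : (A - s ^ 2 • 1 : Matrix (Fin m) (Fin m) ℝ).PosSemidef := by
    have heq : A - s ^ 2 • (1 : Matrix (Fin m) (Fin m) ℝ) =
        (A - (s ^ 2 + b₁ * κ₁ ^ 2 / 2) • 1) + (b₁ * κ₁ ^ 2 / 2) • 1 := by module
    rw [heq]
    exact hN.add (psd_smul Matrix.PosSemidef.one (by positivity))
  -- complexification
  have ΓcP := posSemidef_map_complex hΓpos.posSemidef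
  have McP := posSemidef_map_complex hMr
  have NcP := posSemidef_map_complex hN
  set Γc := Γ.map (fun a => (a : ℂ))
  set Mc := (A - s ^ 2 • 1 : Matrix (Fin m) (Fin m) ℝ).map (fun a => (a : ℂ))
  set Nc := (A - (s ^ 2 + b₁ * κ₁ ^ 2 / 2) • 1 : Matrix (Fin m) (Fin m) ℝ).map
    (fun a => (a : ℂ))
  set D := (-(ε * s ^ 2) : ℂ) • (1 : Matrix (Fin m) (Fin m) ℂ)
    + (Complex.I * s) • Γ.map (fun a => (a : ℂ))
    + (ε : ℂ) • A.map (fun a => (a : ℂ)) with hDdef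
  have hD : D = (Complex.I * s) • Γc + (ε : ℂ) • Mc := by
    ext i j
    by_cases h : i = j <;>
      simp [Matrix.add_apply, Matrix.smul_apply, Matrix.map_apply, Matrix.one_apply, h,
        Matrix.sub_apply, Mc, Γc, D] <;> push_cast <;> ring
  have hMN : Mc = Nc + ((b₁ * κ₁ ^ 2 / 2 : ℝ) : ℂ) • 1 := by
    ext i j
    by_cases h : i = j <;>
      simp [Matrix.add_apply, Matrix.smul_apply, Matrix.map_apply, Matrix.one_apply, h,
        Matrix.sub_apply, Mc, Nc] <;> push_cast <;> ring
  have quad : ∀ x : Fin m → ℂ,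
      ε * (b₁ * κ₁ ^ 2 / 2) * (dotProduct (star x) x).re
        ≤ (dotProduct (star x) (D *ᵥ x)).re := by
    intro x
    have hγ := ΓcP.dotProduct_mulVec_nonneg x
    have hν := NcP.dotProduct_mulVec_nonneg x
    rw [Complex.le_def] at hγ hν
    simp only [Complex.zero_re, Complex.zero_im] at hγ hν
    rw [hD, hMN]
    simp only [Matrix.add_mulVec, Matrix.smul_mulVec, Matrix.one_mulVec,
      dotProduct_add, dotProduct_smul, smul_eq_mul]
    simp only [Complex.add_re, Complex.mul_re, Complex.mul_im, Complex.I_re, Complex.I_im,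
      Complex.ofReal_re, Complex.ofReal_im]
    rw [← hγ.2]
    ring_nf
    nlinarith [mul_nonneg hε.le hν.1]
  have hprop : propagator m Γ A ε s = D := rfl
  -- normalized lower bound on the operator
  set c := ε * (b₁ * κ₁ ^ 2 / 2) with hc
  have hcpos : 0 < c := by positivity
  have key : ∀ v : EuclideanSpace ℂ (Fin m),
      c * ‖v‖ ≤ ‖Matrix.toEuclideanLin D v‖ := by
    intro v
    rcases eq_or_ne v 0 with rfl | hv
    · simp
    · have h2 : (inner ℂ v (Matrix.toEuclideanLin D v) : ℂ) =
          dotProduct (star (WithLp.equiv 2 (Fin m → ℂ) v))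
            (D *ᵥ (WithLp.equiv 2 (Fin m → ℂ) v)) := by
        rw [EuclideanSpace.inner_eq_star_dotProduct, dotProduct_comm]
        congr 1
      have h3 : (‖v‖ : ℝ) ^ 2 =
          (dotProduct (star (WithLp.equiv 2 (Fin m → ℂ) v))
            (WithLp.equiv 2 (Fin m → ℂ) v)).re := by
        rw [← inner_self_eq_norm_sq (𝕜 := ℂ) v, EuclideanSpace.inner_eq_star_dotProduct, dotProduct_comm]
        rfl
      have h4 : c * ‖v‖ ^ 2 ≤ RCLike.re (inner ℂ v (Matrix.toEuclideanLin D v) : ℂ) := by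
        rw [h2, hc, h3, RCLike.re_to_complex]
        exact quad _
      have h1 : c * ‖v‖ ^ 2 ≤ ‖v‖ * ‖Matrix.toEuclideanLin D v‖ :=
        h4.trans (re_inner_le_norm v _)
      have hnv : 0 < ‖v‖ := norm_pos_iff.mpr hv
      have h5 : ‖v‖ * (c * ‖v‖) ≤ ‖v‖ * ‖Matrix.toEuclideanLin D v‖ := by
        calc ‖v‖ * (c * ‖v‖) = c * ‖v‖ ^ 2 := by ring
        _ ≤ _ := h1
      exact le_of_mul_le_mul_left h5 hnv
  -- invertibility
  have hinj : Function.Injective (D.mulVec) := by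
    intro x y hxy
    have h0 : D *ᵥ (x - y) = 0 := by rw [Matrix.mulVec_sub, hxy, sub_self]
    have hk := key ((WithLp.equiv 2 (Fin m → ℂ)).symm (x - y))
    rw [show Matrix.toEuclideanLin D ((WithLp.equiv 2 (Fin m → ℂ)).symm (x - y)) =
      (WithLp.equiv 2 (Fin m → ℂ)).symm (D *ᵥ (x - y)) from rfl, h0] at hk
    rw [show ((WithLp.equiv 2 (Fin m → ℂ)).symm (0 : Fin m → ℂ)) = 0 from rfl, norm_zero] at hk
    have hnorm0 : ‖(WithLp.equiv 2 (Fin m → ℂ)).symm (x - y)‖ ≤ 0 := by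
      nlinarith [hk, norm_nonneg ((WithLp.equiv 2 (Fin m → ℂ)).symm (x - y))]
    have hv0 : (WithLp.equiv 2 (Fin m → ℂ)).symm (x - y) = 0 := norm_le_zero_iff.mp hnorm0
    have := congrArg (WithLp.equiv 2 (Fin m → ℂ)) hv0
    simp only [Equiv.apply_symm_apply] at this
    have hxy0 : x - y = 0 := by simpa using this
    exact sub_eq_zero.mp hxy0
  have hu : IsUnit D := Matrix.mulVec_injective_iff_isUnit.mp hinj
  have hdet : IsUnit D.det := (Matrix.isUnit_iff_isUnit_det D).mp hu
  have hDDinv : D * D⁻¹ = 1 := Matrix.mul_nonsing_inv D hdet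
  refine ⟨hprop ▸ hu, ?_⟩
  rw [hprop]
  have hbound0 : (0 : ℝ) ≤ 2 / (κ₁ ^ 2 * b₁ * ε) := by positivity
  refine ContinuousLinearMap.opNorm_le_bound _ hbound0 (fun w => ?_)
  rw [LinearMap.coe_toContinuousLinearMap']
  have hTv : Matrix.toEuclideanLin D (Matrix.toEuclideanLin D⁻¹ w) = w := by
    rw [Matrix.toEuclideanLin_apply D⁻¹, Matrix.toEuclideanLin_apply_piLp_toLp,
      Matrix.mulVec_mulVec, hDDinv, Matrix.one_mulVec]
  have hk := key (Matrix.toEuclideanLin D⁻¹ w)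
  rw [hTv] at hk
  have heq : 2 / (κ₁ ^ 2 * b₁ * ε) * ‖w‖ = ‖w‖ / c := by
    rw [hc]
    field_simp
  rw [heq, le_div_iff₀ hcpos]
  nlinarith [hk]

end
end

section
/- Let m ≥ 1 and let M, Γ and A be symmetric positive definite real m×m matrices. Let κ₁² denote the smallest eigenvalue of Γ, let K be the positive definite symmetric square root of Γ, let b₁ > 0 denote the smallest eigenvalue of K⁻¹ A K⁻¹, let W > 0 denote the largest eigenvalue of K⁻¹ M K⁻¹, and set α = √(b₁/(2W)) and ε₁ = α/b₁. Then for every ε ∈ (0, ε₁) and every s ∈ ℝ with s ≠ 0, the matrix D(ε, s) = −ε s² M + i s Γ + ε A is invertible and ‖D(ε, s)⁻¹‖ ≤ (1/κ₁²) · min{ 2/(b₁ ε), max{ 1/α, 1/|s| } }. -/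
noncomputable section

open Matrix
open scoped ComplexOrder

namespace PropagatorAux

variable {n : ℕ}

theorem sub_smul_one_posSemidef {P : Matrix (Fin n) (Fin n) ℝ} (hP : P.IsHermitian) {b : ℝ}
    (hb : ∀ μ ∈ spectrum ℝ P, b ≤ μ) : (P - b • 1).PosSemidef := by
  have heig : ∀ i, b ≤ hP.eigenvalues i := fun i =>
    hb _ (hP.spectrum_real_eq_range_eigenvalues.symm ▸ Set.mem_range_self i)
  set U : Matrix (Fin n) (Fin n) ℝ := (hP.eigenvectorUnitary : Matrix (Fin n) (Fin n) ℝ) with hUdef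
  have hU : U * Uᴴ = 1 := by
    have := Matrix.mem_unitaryGroup_iff.mp hP.eigenvectorUnitary.2
    rwa [Matrix.star_eq_conjTranspose] at this
  have hst := hP.spectral_theorem
  rw [Unitary.conjStarAlgAut_apply, Matrix.star_eq_conjTranspose] at hst
  have key : P - b • 1 = U * Matrix.diagonal (fun i => hP.eigenvalues i - b) * Uᴴ := by
    have h1 : (b : ℝ) • (1 : Matrix (Fin n) (Fin n) ℝ) = U * Matrix.diagonal (fun _ => b) * Uᴴ := by
      rw [Matrix.smul_one_eq_diagonal]
      calc Matrix.diagonal (fun _ => b) = U * Uᴴ * Matrix.diagonal (fun _ => b) := by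
            rw [hU, one_mul]
        _ = U * Matrix.diagonal (fun _ => b) * Uᴴ := by
            rw [Matrix.mul_assoc, Matrix.mul_assoc]
            congr 1
            rw [← Matrix.smul_one_eq_diagonal, Matrix.mul_smul, Matrix.smul_mul, mul_one, one_mul]
    conv_lhs => rw [hst, h1]
    rw [← Matrix.sub_mul, ← Matrix.mul_sub, Matrix.diagonal_sub]
    congr
  rw [key]
  exact (Matrix.PosSemidef.diagonal (fun i => sub_nonneg.mpr (heig i))).mul_mul_conjTranspose_same _

theorem smul_one_sub_posSemidef {P : Matrix (Fin n) (Fin n) ℝ} (hP : P.IsHermitian) {W : ℝ}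
    (hb : ∀ μ ∈ spectrum ℝ P, μ ≤ W) : (W • 1 - P).PosSemidef := by
  have h := sub_smul_one_posSemidef (P := -P) hP.neg (b := -W) ?_
  · have : -P - (-W) • 1 = W • 1 - P := by rw [neg_smul]; abel
    rwa [this] at h
  · intro μ hμ
    have h2 : -μ ∈ spectrum ℝ P := by
      rw [← spectrum.neg_eq] at hμ
      exact Set.mem_neg.mp hμ
    have := hb _ h2
    linarith

theorem map_posSemidef {P : Matrix (Fin n) (Fin n) ℝ} (hP : P.PosSemidef) :
    (P.map (fun a => (a : ℂ))).PosSemidef := by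
  obtain ⟨B, rfl⟩ : ∃ B : Matrix (Fin n) (Fin n) ℝ, P = Bᴴ * B := by
    classical
    open scoped MatrixOrder in
    obtain ⟨X, hX, -, hXX⟩ := sub_zero P ▸
      CFC.exists_sqrt_of_isSelfAdjoint_of_quasispectrumRestricts hP.isHermitian
        (QuasispectrumRestricts.nnreal_of_nonneg hP.nonneg)
    refine ⟨X, ?_⟩
    rw [← Matrix.star_eq_conjTranspose, hX.star_eq, hXX, sub_zero]
  have : (Bᴴ * B).map (fun a => (a : ℂ))
      = (B.map (fun a => (a : ℂ)))ᴴ * (B.map (fun a => (a : ℂ))) := by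
    ext i j
    simp [Matrix.mul_apply, Matrix.map_apply, Matrix.conjTranspose_apply]
  rw [this]
  exact Matrix.posSemidef_conjTranspose_mul_self _

theorem inner_psd_nonneg (Q : Matrix (Fin n) (Fin n) ℂ) (hQ : Q.PosSemidef)
    (v : EuclideanSpace ℂ (Fin n)) :
    0 ≤ Complex.re (inner ℂ v (Matrix.toEuclideanCLM (𝕜 := ℂ) Q v) : ℂ) := by
  have h : (inner ℂ v (Matrix.toEuclideanCLM (𝕜 := ℂ) Q v) : ℂ)
      = dotProduct (star ((WithLp.equiv 2 _) v)) (Q *ᵥ ((WithLp.equiv 2 _) v)) := by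
    rw [EuclideanSpace.inner_eq_star_dotProduct]
    exact dotProduct_comm _ _
  rw [h]
  exact hQ.re_dotProduct_nonneg _

theorem map_sub_smul_one (P : Matrix (Fin n) (Fin n) ℝ) (b : ℝ) :
    (P - b • 1).map (fun a => (a : ℂ)) = P.map (fun a => (a : ℂ)) - (b : ℂ) • 1 := by
  ext i j
  by_cases h : i = j <;>
    simp [Matrix.map_apply, Matrix.sub_apply, Matrix.smul_apply, Matrix.one_apply, h]

theorem quad_lower {P : Matrix (Fin n) (Fin n) ℝ} (hP : P.IsHermitian) {b : ℝ}
    (hb : ∀ μ ∈ spectrum ℝ P, b ≤ μ) (v : EuclideanSpace ℂ (Fin n)) :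
    b * ‖v‖ ^ 2 ≤ Complex.re (inner ℂ v
      (Matrix.toEuclideanCLM (𝕜 := ℂ) (P.map (fun a => (a : ℂ))) v) : ℂ) := by
  have hre := inner_psd_nonneg _ (map_posSemidef (sub_smul_one_posSemidef hP hb)) v
  rw [map_sub_smul_one] at hre
  have hsplit : (Matrix.toEuclideanCLM (𝕜 := ℂ) (P.map (fun a => (a : ℂ)) - (b : ℂ) • 1)) v
      = Matrix.toEuclideanCLM (𝕜 := ℂ) (P.map (fun a => (a : ℂ))) v - (b : ℂ) • v := by
    simp only [map_sub, ContinuousLinearMap.sub_apply, _root_.map_smul,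
      ContinuousLinearMap.smul_apply, _root_.map_one, ContinuousLinearMap.one_apply]
  rw [hsplit, inner_sub_right, inner_smul_right] at hre
  have h2 : (inner ℂ v v : ℂ) = ((‖v‖ : ℂ)) ^ 2 := inner_self_eq_norm_sq_to_K v
  rw [h2, ← Complex.ofReal_pow] at hre
  simp only [Complex.sub_re, Complex.mul_re, Complex.ofReal_re, Complex.ofReal_im] at hre
  linarith [hre]

theorem quad_upper {P : Matrix (Fin n) (Fin n) ℝ} (hP : P.IsHermitian) {W : ℝ}
    (hb : ∀ μ ∈ spectrum ℝ P, μ ≤ W) (v : EuclideanSpace ℂ (Fin n)) :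
    Complex.re (inner ℂ v
      (Matrix.toEuclideanCLM (𝕜 := ℂ) (P.map (fun a => (a : ℂ))) v) : ℂ) ≤ W * ‖v‖ ^ 2 := by
  have h := quad_lower (P := -P) hP.neg (b := -W) ?_ v
  · have hmap : ((-P).map (fun a => (a : ℂ))) = -(P.map (fun a => (a : ℂ))) := by
      ext i j; simp [Matrix.map_apply]
    rw [hmap] at h
    simp only [map_neg, ContinuousLinearMap.neg_apply, inner_neg_right, Complex.neg_re] at h
    linarith
  · intro μ hμ
    have h2 : -μ ∈ spectrum ℝ P := by
      rw [← spectrum.neg_eq] at hμ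
      exact Set.mem_neg.mp hμ
    have := hb _ h2
    linarith

theorem inv_max_eq {a b : ℝ} (ha : 0 < a) (hb : 0 < b) : (max a b)⁻¹ = min a⁻¹ b⁻¹ := by
  rcases le_total a b with h | h
  · rw [max_eq_right h, min_eq_right (by gcongr)]
  · rw [max_eq_left h, min_eq_left (by gcongr)]

theorem inv_min_eq {a b : ℝ} (ha : 0 < a) (hb : 0 < b) : (min a b)⁻¹ = max a⁻¹ b⁻¹ := by
  rcases le_total a b with h | h
  · rw [min_eq_left h, max_eq_left (by gcongr)]
  · rw [min_eq_right h, max_eq_right (by gcongr)]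

theorem le_of_sq_le_sq' {a b : ℝ} (hb : 0 ≤ b) (h : a ^ 2 ≤ b ^ 2) (ha : 0 ≤ a) : a ≤ b := by
  nlinarith

end PropagatorAux

open PropagatorAux

/-- The propagator matrix `D(ε,s) = -ε s² M + i s Γ + ε A` with mass matrix `M`. -/
def propagatorM (m : ℕ) (M Γ A : Matrix (Fin m) (Fin m) ℝ) (ε s : ℝ) :
    Matrix (Fin m) (Fin m) ℂ :=
  (-(ε * s ^ 2) : ℂ) • M.map (fun a => (a : ℂ))
    + (Complex.I * s) • Γ.map (fun a => (a : ℂ))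
    + (ε : ℂ) • A.map (fun a => (a : ℂ))

set_option maxHeartbeats 2000000 in
theorem propagator_inverse_bound_mass_matrix
    (m : ℕ) (hm : 1 ≤ m)
    (M Γ A : Matrix (Fin m) (Fin m) ℝ)
    (hMsymm : M.IsSymm) (hMpos : M.PosDef)
    (hΓsymm : Γ.IsSymm) (hΓpos : Γ.PosDef) (hAsymm : A.IsSymm) (hApos : A.PosDef)
    (κ₁ : ℝ) (hκ : IsLeast (spectrum ℝ Γ) (κ₁ ^ 2))
    (K : Matrix (Fin m) (Fin m) ℝ) (hKsymm : K.IsSymm) (hKpos : K.PosDef)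
    (hKsq : K * K = Γ)
    (b₁ : ℝ) (hb₁pos : 0 < b₁) (hb₁ : IsLeast (spectrum ℝ (K⁻¹ * A * K⁻¹)) b₁)
    (W : ℝ) (hWpos : 0 < W) (hW : IsGreatest (spectrum ℝ (K⁻¹ * M * K⁻¹)) W)
    (α : ℝ) (hα : α = Real.sqrt (b₁ / (2 * W)))
    (ε : ℝ) (hε : 0 < ε) (hε₁ : ε < α / b₁)
    (s : ℝ) (hs : s ≠ 0) :
    IsUnit (propagatorM m M Γ A ε s) ∧
      l2OpNorm m (propagatorM m M Γ A ε s)⁻¹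
        ≤ (1 / κ₁ ^ 2) * min (2 / (b₁ * ε)) (max (1 / α) (1 / |s|)) := by
  classical
  -- basic positivity
  have hκsq : 0 < κ₁ ^ 2 := by
    have h1 : κ₁ ^ 2 ∈ Set.range hΓpos.1.eigenvalues :=
      hΓpos.1.spectrum_real_eq_range_eigenvalues.symm ▸ hκ.1
    obtain ⟨i, hi⟩ := h1
    exact hi ▸ hΓpos.eigenvalues_pos i
  have hαpos : 0 < α := hα ▸ Real.sqrt_pos.mpr (by positivity)
  have hαsq : α ^ 2 = b₁ / (2 * W) := by rw [hα]; exact Real.sq_sqrt (by positivity)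
  have hεb : ε * b₁ < α := (lt_div_iff₀ hb₁pos).mp hε₁
  have hspos : 0 < |s| := abs_pos.mpr hs
  set c₀ : ℝ := max (ε * b₁ / 2) (min α |s|) with hc₀def
  have hc₀pos : 0 < c₀ := lt_max_of_lt_left (by positivity)
  -- K inverse facts
  have hKdet : K.det ≠ 0 := hKpos.det_pos.ne'
  have hKK : K * K⁻¹ = 1 := Matrix.mul_nonsing_inv _ (Ne.isUnit hKdet)
  have hKK' : K⁻¹ * K = 1 := Matrix.nonsing_inv_mul _ (Ne.isUnit hKdet)
  -- hermitian facts
  have hArherm : (K⁻¹ * A * K⁻¹).IsHermitian := by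
    have h := Matrix.isHermitian_conjTranspose_mul_mul K⁻¹ hApos.1
    rwa [hKpos.inv.1] at h
  have hMrherm : (K⁻¹ * M * K⁻¹).IsHermitian := by
    have h := Matrix.isHermitian_conjTranspose_mul_mul K⁻¹ hMpos.1
    rwa [hKpos.inv.1] at h
  set Br : Matrix (Fin m) (Fin m) ℝ :=
    ε • (K⁻¹ * A * K⁻¹) - (ε * s ^ 2) • (K⁻¹ * M * K⁻¹) with hBrdef
  have hBrherm : Br.IsHermitian := by
    unfold Br
    unfold Matrix.IsHermitian
    rw [Matrix.conjTranspose_sub, Matrix.conjTranspose_smul, Matrix.conjTranspose_smul,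
      hArherm.eq, hMrherm.eq]
    congr 1 <;> simp
  -- complexification helpers
  have hmapmul : ∀ (X Y : Matrix (Fin m) (Fin m) ℝ),
      (X * Y).map (fun a => (a : ℂ)) = X.map (fun a => (a : ℂ)) * Y.map (fun a => (a : ℂ)) := by
    intro X Y
    ext i j
    simp [Matrix.mul_apply, Matrix.map_apply]
  have hmapone : (1 : Matrix (Fin m) (Fin m) ℝ).map (fun a => (a : ℂ)) = 1 := by
    ext i j
    by_cases h : i = j <;> simp [Matrix.one_apply, h]
  set Kc : Matrix (Fin m) (Fin m) ℂ := K.map (fun a => (a : ℂ)) with hKcdef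
  set Kic : Matrix (Fin m) (Fin m) ℂ := K⁻¹.map (fun a => (a : ℂ)) with hKicdef
  have hKcK : Kc * Kic = 1 := by rw [hKcdef, hKicdef, ← hmapmul, hKK, hmapone]
  have hKicK : Kic * Kc = 1 := by rw [hKcdef, hKicdef, ← hmapmul, hKK', hmapone]
  have hKcKc : Kc * Kc = Γ.map (fun a => (a : ℂ)) := by rw [hKcdef, ← hmapmul, hKsq]
  set Dc : Matrix (Fin m) (Fin m) ℂ :=
    Br.map (fun a => (a : ℂ)) + (Complex.I * s) • 1 with hDcdef
  -- the factorization
  have hconjA : Kc * ((K⁻¹ * A * K⁻¹).map (fun a => (a : ℂ))) * Kc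
      = A.map (fun a => (a : ℂ)) := by
    rw [hmapmul (K⁻¹ * A) K⁻¹, hmapmul K⁻¹ A]
    rw [show Kc * (Kic * A.map (fun a => (a : ℂ)) * Kic) * Kc
        = (Kc * Kic) * A.map (fun a => (a : ℂ)) * (Kic * Kc) by noncomm_ring,
      hKcK, hKicK, one_mul, mul_one]
  have hconjM : Kc * ((K⁻¹ * M * K⁻¹).map (fun a => (a : ℂ))) * Kc
      = M.map (fun a => (a : ℂ)) := by
    rw [hmapmul (K⁻¹ * M) K⁻¹, hmapmul K⁻¹ M]
    rw [show Kc * (Kic * M.map (fun a => (a : ℂ)) * Kic) * Kc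
        = (Kc * Kic) * M.map (fun a => (a : ℂ)) * (Kic * Kc) by noncomm_ring,
      hKcK, hKicK, one_mul, mul_one]
  have hBrsplit : Br.map (fun a => (a : ℂ))
      = (ε : ℂ) • ((K⁻¹ * A * K⁻¹).map (fun a => (a : ℂ)))
        - ((ε * s ^ 2 : ℝ) : ℂ) • ((K⁻¹ * M * K⁻¹).map (fun a => (a : ℂ))) := by
    ext i j
    simp [hBrdef, Matrix.map_apply, Matrix.sub_apply, Matrix.smul_apply]
  have hfact : propagatorM m M Γ A ε s = Kc * Dc * Kc := by
    rw [hDcdef, hBrsplit]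
    simp only [Matrix.mul_add, Matrix.add_mul, Matrix.mul_sub, Matrix.sub_mul,
      Matrix.mul_smul, Matrix.smul_mul, Matrix.mul_one]
    rw [hconjA, hconjM, hKcKc]
    unfold propagatorM
    push_cast
    module
  -- quadratic form bounds
  have hH1 : ∀ v : EuclideanSpace ℂ (Fin m), κ₁ ^ 2 * ‖v‖ ^ 2 ≤
      Complex.re (inner ℂ v (Matrix.toEuclideanCLM (𝕜 := ℂ)
        (Γ.map (fun a => (a : ℂ))) v) : ℂ) :=
    fun v => quad_lower hΓpos.1 (fun μ hμ => hκ.2 hμ) v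
  have hH2 : ∀ v : EuclideanSpace ℂ (Fin m), b₁ * ‖v‖ ^ 2 ≤
      Complex.re (inner ℂ v (Matrix.toEuclideanCLM (𝕜 := ℂ)
        ((K⁻¹ * A * K⁻¹).map (fun a => (a : ℂ))) v) : ℂ) :=
    fun v => quad_lower hArherm (fun μ hμ => hb₁.2 hμ) v
  have hH3 : ∀ v : EuclideanSpace ℂ (Fin m),
      Complex.re (inner ℂ v (Matrix.toEuclideanCLM (𝕜 := ℂ)
        ((K⁻¹ * M * K⁻¹).map (fun a => (a : ℂ))) v) : ℂ) ≤ W * ‖v‖ ^ 2 :=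
    fun v => quad_upper hMrherm (fun μ hμ => hW.2 hμ) v
  -- self-adjointness
  have hsaK : ContinuousLinearMap.adjoint (Matrix.toEuclideanCLM (𝕜 := ℂ) Kc)
      = Matrix.toEuclideanCLM (𝕜 := ℂ) Kc := by
    rw [← ContinuousLinearMap.star_eq_adjoint, ← map_star]
    congr 1
    rw [hKcdef, Matrix.star_eq_conjTranspose, ← Matrix.conjTranspose_map (fun a : ℝ => (a : ℂ))
      (fun a => by simp [Function.Semiconj]), hKpos.1.eq]
  have hsaB : ContinuousLinearMap.adjoint (Matrix.toEuclideanCLM (𝕜 := ℂ)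
      (Br.map (fun a => (a : ℂ))))
      = Matrix.toEuclideanCLM (𝕜 := ℂ) (Br.map (fun a => (a : ℂ))) := by
    rw [← ContinuousLinearMap.star_eq_adjoint, ← map_star]
    congr 1
    rw [Matrix.star_eq_conjTranspose, ← Matrix.conjTranspose_map (fun a : ℝ => (a : ℂ))
      (fun a => by simp [Function.Semiconj]), hBrherm.eq]
  -- lower bound for K
  have lowK : ∀ x : EuclideanSpace ℂ (Fin m),
      Real.sqrt (κ₁ ^ 2) * ‖x‖ ≤ ‖Matrix.toEuclideanCLM (𝕜 := ℂ) Kc x‖ := by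
    intro x
    have hid : ‖Matrix.toEuclideanCLM (𝕜 := ℂ) Kc x‖ ^ 2
        = Complex.re (inner ℂ x (Matrix.toEuclideanCLM (𝕜 := ℂ)
            (Γ.map (fun a => (a : ℂ))) x) : ℂ) := by
      rw [← hKcKc, _root_.map_mul, ContinuousLinearMap.mul_apply]
      conv_rhs => rw [← hsaK]
      rw [ContinuousLinearMap.adjoint_inner_right]
      rw [hsaK]
      exact (inner_self_eq_norm_sq (𝕜 := ℂ) (E := EuclideanSpace ℂ (Fin m)) _).symm
    have h1 : (Real.sqrt (κ₁ ^ 2) * ‖x‖) ^ 2 ≤ ‖Matrix.toEuclideanCLM (𝕜 := ℂ) Kc x‖ ^ 2 := by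
      rw [mul_pow, Real.sq_sqrt hκsq.le, hid]
      exact hH1 x
    exact le_of_sq_le_sq' (norm_nonneg _) h1 (by positivity)
  -- lower bound for Dc
  have lowD : ∀ x : EuclideanSpace ℂ (Fin m),
      c₀ * ‖x‖ ≤ ‖Matrix.toEuclideanCLM (𝕜 := ℂ) Dc x‖ := by
    intro x
    have hxsplit : Matrix.toEuclideanCLM (𝕜 := ℂ) Dc x
        = Matrix.toEuclideanCLM (𝕜 := ℂ) (Br.map (fun a => (a : ℂ))) x
          + (Complex.I * s) • x := by
      rw [hDcdef]
      simp only [map_add, ContinuousLinearMap.add_apply, _root_.map_smul,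
        ContinuousLinearMap.smul_apply, _root_.map_one, ContinuousLinearMap.one_apply]
    have e1 : (inner ℂ (Matrix.toEuclideanCLM (𝕜 := ℂ) (Br.map (fun a => (a : ℂ))) x) x : ℂ)
        = inner ℂ x (Matrix.toEuclideanCLM (𝕜 := ℂ) (Br.map (fun a => (a : ℂ))) x) := by
      conv_lhs => rw [← hsaB]
      exact ContinuousLinearMap.adjoint_inner_left _ _ _
    have hBreal : (inner ℂ (Matrix.toEuclideanCLM (𝕜 := ℂ) (Br.map (fun a => (a : ℂ))) x) x
        : ℂ).im = 0 := by
      have e2 : (starRingEnd ℂ)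
          (inner ℂ (Matrix.toEuclideanCLM (𝕜 := ℂ) (Br.map (fun a => (a : ℂ))) x) x : ℂ)
          = inner ℂ x (Matrix.toEuclideanCLM (𝕜 := ℂ) (Br.map (fun a => (a : ℂ))) x) :=
        inner_conj_symm _ _
      rw [← e1] at e2
      have h3 := congrArg Complex.im e2
      simp only [Complex.conj_im] at h3
      linarith
    have hcross : Complex.re (inner ℂ
        (Matrix.toEuclideanCLM (𝕜 := ℂ) (Br.map (fun a => (a : ℂ))) x)
        ((Complex.I * s) • x) : ℂ) = 0 := by
      rw [inner_smul_right]
      simp only [Complex.mul_re, Complex.mul_im, Complex.I_re, Complex.I_im,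
        Complex.ofReal_re, Complex.ofReal_im, hBreal]
      ring
    have hnorm2 : ‖Matrix.toEuclideanCLM (𝕜 := ℂ) Dc x‖ ^ 2
        = ‖Matrix.toEuclideanCLM (𝕜 := ℂ) (Br.map (fun a => (a : ℂ))) x‖ ^ 2
          + s ^ 2 * ‖x‖ ^ 2 := by
      rw [hxsplit, @norm_add_sq ℂ _ _ _ _]
      simp only [RCLike.re_to_complex]
      rw [hcross, norm_smul]
      have : ‖Complex.I * (s : ℂ)‖ = |s| := by
        rw [norm_mul, Complex.norm_I, one_mul, Complex.norm_real, Real.norm_eq_abs]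
      rw [this, mul_pow, sq_abs]
      ring
    have hDB : ‖Matrix.toEuclideanCLM (𝕜 := ℂ) (Br.map (fun a => (a : ℂ))) x‖
        ≤ ‖Matrix.toEuclideanCLM (𝕜 := ℂ) Dc x‖ := by
      apply le_of_sq_le_sq' (norm_nonneg _) _ (norm_nonneg _)
      rw [hnorm2]; nlinarith [sq_nonneg (s * ‖x‖)]
    have hDs : |s| * ‖x‖ ≤ ‖Matrix.toEuclideanCLM (𝕜 := ℂ) Dc x‖ := by
      apply le_of_sq_le_sq' (norm_nonneg _) _ (by positivity)
      rw [hnorm2, mul_pow, sq_abs]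
      nlinarith [sq_nonneg ‖Matrix.toEuclideanCLM (𝕜 := ℂ) (Br.map (fun a => (a : ℂ))) x‖]
    rcases le_total |s| α with hcase | hcase
    · -- small s : |s| ≤ α
      have hsW : s ^ 2 * W ≤ b₁ / 2 := by
        have hs2 : s ^ 2 ≤ α ^ 2 := by
          rw [← sq_abs]
          exact pow_le_pow_left₀ (abs_nonneg s) hcase 2
        rw [hαsq] at hs2
        calc s ^ 2 * W ≤ (b₁ / (2 * W)) * W := by nlinarith
          _ = b₁ / 2 := by field_simp
      have hq : (ε * b₁ / 2) * ‖x‖ ^ 2 ≤ Complex.re (inner ℂ x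
          (Matrix.toEuclideanCLM (𝕜 := ℂ) (Br.map (fun a => (a : ℂ))) x) : ℂ) := by
        rw [hBrsplit]
        simp only [map_sub, ContinuousLinearMap.sub_apply, _root_.map_smul,
          ContinuousLinearMap.smul_apply, inner_sub_right, inner_smul_right,
          Complex.sub_re, Complex.re_ofReal_mul]
        have h2 := hH2 x
        have h3 := hH3 x
        nlinarith [mul_le_mul_of_nonneg_left h3 (by positivity : (0:ℝ) ≤ ε * s ^ 2),
          mul_le_mul_of_nonneg_left h2 hε.le, mul_le_mul_of_nonneg_left hsW hε.le,
          sq_nonneg ‖x‖]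
      have hBlow : (ε * b₁ / 2) * ‖x‖
          ≤ ‖Matrix.toEuclideanCLM (𝕜 := ℂ) (Br.map (fun a => (a : ℂ))) x‖ := by
        rcases eq_or_lt_of_le (norm_nonneg x) with hx0 | hxpos
        · rw [← hx0, mul_zero]; exact norm_nonneg _
        · have hcs : Complex.re (inner ℂ x
              (Matrix.toEuclideanCLM (𝕜 := ℂ) (Br.map (fun a => (a : ℂ))) x) : ℂ)
              ≤ ‖x‖ * ‖Matrix.toEuclideanCLM (𝕜 := ℂ) (Br.map (fun a => (a : ℂ))) x‖ := by
            refine le_trans (Complex.re_le_norm _) ?_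
            exact norm_inner_le_norm _ _
          nlinarith [hq]
      have hmin : min α |s| = |s| := min_eq_right hcase
      rw [hc₀def, hmin, max_mul_of_nonneg _ _ (norm_nonneg x)]
      exact max_le (le_trans hBlow hDB) hDs
    · -- large s : α ≤ |s|
      have hc₀α : c₀ ≤ |s| := by
        rw [hc₀def, min_eq_left hcase]
        exact max_le (by nlinarith) hcase
      calc c₀ * ‖x‖ ≤ |s| * ‖x‖ := by gcongr
        _ ≤ _ := hDs
  -- key lower bound for the full propagator
  have key : ∀ v : EuclideanSpace ℂ (Fin m), (κ₁ ^ 2 * c₀) * ‖v‖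
      ≤ ‖Matrix.toEuclideanCLM (𝕜 := ℂ) (propagatorM m M Γ A ε s) v‖ := by
    intro v
    have happ : Matrix.toEuclideanCLM (𝕜 := ℂ) (propagatorM m M Γ A ε s) v
        = Matrix.toEuclideanCLM (𝕜 := ℂ) Kc
            (Matrix.toEuclideanCLM (𝕜 := ℂ) Dc
              (Matrix.toEuclideanCLM (𝕜 := ℂ) Kc v)) := by
      rw [hfact, _root_.map_mul, _root_.map_mul]
      rfl
    rw [happ]
    have hkk : κ₁ ^ 2 = Real.sqrt (κ₁ ^ 2) * Real.sqrt (κ₁ ^ 2) :=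
      (Real.mul_self_sqrt hκsq.le).symm
    have step1 := lowK v
    have step2 := lowD (Matrix.toEuclideanCLM (𝕜 := ℂ) Kc v)
    have step3 := lowK (Matrix.toEuclideanCLM (𝕜 := ℂ) Dc
      (Matrix.toEuclideanCLM (𝕜 := ℂ) Kc v))
    have hsqrtpos : 0 < Real.sqrt (κ₁ ^ 2) := Real.sqrt_pos.mpr hκsq
    calc (κ₁ ^ 2 * c₀) * ‖v‖
        = Real.sqrt (κ₁ ^ 2) * (c₀ * (Real.sqrt (κ₁ ^ 2) * ‖v‖)) := by
          conv_lhs => rw [hkk]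
          ring
      _ ≤ Real.sqrt (κ₁ ^ 2) * (c₀ * ‖Matrix.toEuclideanCLM (𝕜 := ℂ) Kc v‖) := by
          have := mul_le_mul_of_nonneg_left step1 hc₀pos.le
          exact mul_le_mul_of_nonneg_left this hsqrtpos.le
      _ ≤ Real.sqrt (κ₁ ^ 2) * ‖Matrix.toEuclideanCLM (𝕜 := ℂ) Dc
            (Matrix.toEuclideanCLM (𝕜 := ℂ) Kc v)‖ :=
          mul_le_mul_of_nonneg_left step2 hsqrtpos.le
      _ ≤ _ := step3
  -- invertibility
  have hdet : (propagatorM m M Γ A ε s).det ≠ 0 := by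
    intro h0
    obtain ⟨v, hv, hv0⟩ := (Matrix.exists_mulVec_eq_zero_iff).mpr h0
    have hΦ0 : Matrix.toEuclideanCLM (𝕜 := ℂ) (propagatorM m M Γ A ε s)
        ((WithLp.equiv 2 (Fin m → ℂ)).symm v) = 0 := by
      change WithLp.toLp 2 (Matrix.toLin' (propagatorM m M Γ A ε s) v) = 0
      rw [Matrix.toLin'_apply, hv0]
      rfl
    have hk := key ((WithLp.equiv 2 (Fin m → ℂ)).symm v)
    rw [hΦ0, norm_zero] at hk
    have hpos : 0 < κ₁ ^ 2 * c₀ := by positivity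
    have hn0 : ‖(WithLp.equiv 2 (Fin m → ℂ)).symm v‖ = 0 := by
      nlinarith [norm_nonneg ((WithLp.equiv 2 (Fin m → ℂ)).symm v)]
    have : (WithLp.equiv 2 (Fin m → ℂ)).symm v = 0 := norm_eq_zero.mp hn0
    exact hv (by simpa using congrArg (WithLp.equiv 2 (Fin m → ℂ)) this)
  have hUnit : IsUnit (propagatorM m M Γ A ε s) :=
    (Matrix.isUnit_iff_isUnit_det _).mpr (Ne.isUnit hdet)
  refine ⟨hUnit, ?_⟩
  have hDDinv : propagatorM m M Γ A ε s * (propagatorM m M Γ A ε s)⁻¹ = 1 :=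
    Matrix.mul_nonsing_inv _ (Ne.isUnit hdet)
  -- norm bound for the inverse
  have hnorm_eq : l2OpNorm m (propagatorM m M Γ A ε s)⁻¹
      = ‖Matrix.toEuclideanCLM (𝕜 := ℂ) (propagatorM m M Γ A ε s)⁻¹‖ := rfl
  have hbound : ‖Matrix.toEuclideanCLM (𝕜 := ℂ) (propagatorM m M Γ A ε s)⁻¹‖
      ≤ (κ₁ ^ 2 * c₀)⁻¹ := by
    apply ContinuousLinearMap.opNorm_le_bound _ (by positivity)
    intro w
    have h1 := key (Matrix.toEuclideanCLM (𝕜 := ℂ) (propagatorM m M Γ A ε s)⁻¹ w)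
    have h2 : Matrix.toEuclideanCLM (𝕜 := ℂ) (propagatorM m M Γ A ε s)
        (Matrix.toEuclideanCLM (𝕜 := ℂ) (propagatorM m M Γ A ε s)⁻¹ w) = w := by
      rw [← ContinuousLinearMap.mul_apply, ← _root_.map_mul, hDDinv, _root_.map_one,
        ContinuousLinearMap.one_apply]
    rw [h2] at h1
    have hpos : 0 < κ₁ ^ 2 * c₀ := by positivity
    calc ‖Matrix.toEuclideanCLM (𝕜 := ℂ) (propagatorM m M Γ A ε s)⁻¹ w‖
        = ((κ₁ ^ 2 * c₀) * ‖Matrix.toEuclideanCLM (𝕜 := ℂ)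
            (propagatorM m M Γ A ε s)⁻¹ w‖) / (κ₁ ^ 2 * c₀) := by
          rw [mul_div_cancel_left₀ _ hpos.ne']
      _ ≤ ‖w‖ / (κ₁ ^ 2 * c₀) := by gcongr
      _ = (κ₁ ^ 2 * c₀)⁻¹ * ‖w‖ := by ring
  -- rewrite the constant
  have hc₀inv : c₀⁻¹ = min (2 / (b₁ * ε)) (max (1 / α) (1 / |s|)) := by
    rw [hc₀def, inv_max_eq (by positivity) (lt_min hαpos hspos), inv_min_eq hαpos hspos]
    congr 1
    · rw [inv_div]
      ring_nf
    · rw [one_div, one_div]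
  calc l2OpNorm m (propagatorM m M Γ A ε s)⁻¹ ≤ (κ₁ ^ 2 * c₀)⁻¹ := by
        rw [hnorm_eq]; exact hbound
    _ = (1 / κ₁ ^ 2) * c₀⁻¹ := by rw [mul_inv, one_div]
    _ = (1 / κ₁ ^ 2) * min (2 / (b₁ * ε)) (max (1 / α) (1 / |s|)) := by rw [hc₀inv]

end
end
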